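/- The image of the monomorphism from the direct sum of the trivial representation and the standard representation into the defining Z-linear permutation representation of Sym(n) on Zⁿ, sending t to v_1+...+v_n and e_i to v_i − v_n, is exactly the subgroup of n-tuples of integers whose coordinate sum is divisible by n. -/
import Mathlib
set_option autoImplicit false

private lemma eval_cast (n : ℕ) (p : ℤ × (Fin n → ℤ)) (k : Fin n) :
    (((fun _ => p.1) + ∑ i : Fin n, p.2 i • (Pi.single (Fin.castSucc i) (1:ℤ) - Pi.single (Fin.last n) 1)) : Fin (n+1) → ℤ) (Fin.castSucc k) = p.1 + p.2 k := by
  simp [Finset.sum_apply, Pi.single_apply, Fin.castSucc_inj, (Fin.castSucc_lt_last k).ne]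

private lemma eval_last (n : ℕ) (p : ℤ × (Fin n → ℤ)) :
    (((fun _ => p.1) + ∑ i : Fin n, p.2 i • (Pi.single (Fin.castSucc i) (1:ℤ) - Pi.single (Fin.last n) 1)) : Fin (n+1) → ℤ) (Fin.last n) = p.1 - ∑ i, p.2 i := by
  simp [Finset.sum_apply, Pi.single_apply, (Fin.castSucc_lt_last _).ne, sub_eq_add_neg, Finset.sum_neg_distrib]

/-- **Image of `1 ⊕ (n−1)` inside the defining `ℤ`-linear permutation
representation.**
The map `ℤ × ℤⁿ → ℤ^{n+1}` sending `t` to `v₀ + ⋯ + vₙ` (the constant tuple) and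
`eᵢ` to `vᵢ − vₙ` is injective, and its image is exactly the subgroup of
`(n+1)`-tuples of integers whose coordinate sum is divisible by `n+1`. -/
theorem trivial_plus_standard_image (n : ℕ) :
    Function.Injective (fun p : ℤ × (Fin n → ℤ) =>
      (((fun _ => p.1) +
        ∑ i : Fin n, p.2 i •
          (Pi.single (Fin.castSucc i) (1 : ℤ) - Pi.single (Fin.last n) 1)) :
        Fin (n + 1) → ℤ)) ∧
    Set.range (fun p : ℤ × (Fin n → ℤ) =>
      (((fun _ => p.1) +
        ∑ i : Fin n, p.2 i •
          (Pi.single (Fin.castSucc i) (1 : ℤ) - Pi.single (Fin.last n) 1)) :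
        Fin (n + 1) → ℤ)) =
      {a : Fin (n + 1) → ℤ | ((n : ℤ) + 1) ∣ ∑ j, a j} := by
  set f : (ℤ × (Fin n → ℤ)) → (Fin (n+1) → ℤ) := fun p =>
      (((fun _ => p.1) +
        ∑ i : Fin n, p.2 i •
          (Pi.single (Fin.castSucc i) (1 : ℤ) - Pi.single (Fin.last n) 1)) :
        Fin (n + 1) → ℤ) with hf
  have hsum : ∀ p, ∑ j, f p j = ((n : ℤ) + 1) * p.1 := by
    intro p
    rw [Fin.sum_univ_castSucc]
    simp only [hf, eval_cast, eval_last]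
    rw [Finset.sum_add_distrib]
    simp [Finset.sum_const, mul_comm]
    ring
  constructor
  · intro p q h
    have h1 : p.1 = q.1 := by
      have := congrArg (fun a => ∑ j, a j) h
      simp only [hsum] at this
      have hne : ((n : ℤ) + 1) ≠ 0 := by positivity
      exact mul_left_cancel₀ hne this
    have h2 : p.2 = q.2 := by
      funext k
      have := congrFun h (Fin.castSucc k)
      simp only [hf, eval_cast] at this
      linarith [this]
    exact Prod.ext h1 h2
  · ext a
    constructor
    · rintro ⟨p, rfl⟩
      exact ⟨p.1, (hsum p)⟩
    · rintro ⟨c, hc⟩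
      refine ⟨(c, fun i => a (Fin.castSucc i) - c), ?_⟩
      funext j
      induction j using Fin.lastCases with
      | last =>
        refine (eval_last n (c, fun i => a (Fin.castSucc i) - c)).trans ?_
        simp only
        have hs : ∑ j, a j = ∑ i : Fin n, a (Fin.castSucc i) + a (Fin.last n) :=
          Fin.sum_univ_castSucc a
        rw [Finset.sum_sub_distrib]
        simp only [Finset.sum_const, Finset.card_univ, Fintype.card_fin, nsmul_eq_mul]
        have : ∑ i : Fin n, a (Fin.castSucc i) = ((n:ℤ)+1) * c - a (Fin.last n) := by
          rw [← hc, hs]; ring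
        rw [this]; ring
      | cast k =>
        refine (eval_cast n (c, fun i => a (Fin.castSucc i) - c) k).trans ?_
        simp
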